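/- Let n ≥ 1 and let L be a ℤ-lattice in the space of n×n real matrices. Then there exists a constant C > 0 such that for every real δ > 0, the family (exp(−δ·trace(T)))_{T ∈ L, T positive definite} is summable and its sum is at most C / δ^{n² + 1}. -/

import Mathlib

open Real

-- G: x^m * exp (-(x*s)) ≤ (m/s)^m
lemma aux_pow_mul_exp_le (m : ℕ) {s : ℝ} (hs : 0 < s) {x : ℝ} (hx : 0 ≤ x) :
    x ^ m * Real.exp (-(x * s)) ≤ (m / s) ^ m := by
  rcases Nat.eq_zero_or_pos m with rfl | hm
  · have : Real.exp (-(x * s)) ≤ 1 := Real.exp_le_one_iff.mpr (by nlinarith)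
    simpa using this
  · have hm' : (0:ℝ) < m := by exact_mod_cast hm
    have h1 : x * s / m ≤ Real.exp (x * s / m) :=
      le_trans (by linarith [Real.add_one_le_exp (x*s/m)]) (le_refl _)
    have h2 : (x * s / m) ^ m ≤ Real.exp (x * s / m) ^ m := by
      apply pow_le_pow_left₀ (by positivity) h1
    have h3 : Real.exp (x * s / m) ^ m = Real.exp (x * s) := by
      rw [← Real.exp_nat_mul]
      congr 1
      field_simp
    have h4 : (x * s / m) ^ m ≤ Real.exp (x * s) := h3 ▸ h2
    have h5 : x ^ m = (x * s / m) ^ m * (m / s) ^ m := by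
      rw [← mul_pow]
      congr 1
      field_simp
    rw [h5]
    have he : Real.exp (-(x*s)) = (Real.exp (x*s))⁻¹ := by rw [Real.exp_neg]
    rw [he]
    rw [mul_comm ((x*s/m)^m) _, mul_assoc]
    have : (x * s / m) ^ m * (Real.exp (x * s))⁻¹ ≤ 1 := by
      rw [← div_eq_mul_inv, div_le_one (Real.exp_pos _)]
      exact h4
    nlinarith [pow_nonneg (le_of_lt (div_pos hm' hs)) m]

-- (x+y)^m ≤ 2^m * (x^m + y^m)
lemma aux_add_pow_le {x y : ℝ} (hx : 0 ≤ x) (hy : 0 ≤ y) (m : ℕ) :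
    (x + y) ^ m ≤ 2 ^ m * (x ^ m + y ^ m) := by
  rcases le_total x y with h | h
  · calc (x + y)^m ≤ (2*y)^m := by apply pow_le_pow_left₀ (by linarith) (by linarith)
    _ = 2^m * y^m := by rw [mul_pow]
    _ ≤ 2^m * (x^m + y^m) := by nlinarith [pow_nonneg hx m, pow_pos (by norm_num : (0:ℝ)<2) m]
  · calc (x + y)^m ≤ (2*x)^m := by apply pow_le_pow_left₀ (by linarith) (by linarith)
    _ = 2^m * x^m := by rw [mul_pow]
    _ ≤ 2^m * (x^m + y^m) := by nlinarith [pow_nonneg hy m, pow_pos (by norm_num : (0:ℝ)<2) m]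

-- C: sum over ℤ of exp(-t|k|)
lemma aux_hasSum_int_exp {t : ℝ} (ht : 0 < t) :
    ∃ S : ℝ, HasSum (fun k : ℤ => Real.exp (-(t * |(k : ℝ)|))) S ∧ S ≤ 2 + 2 / t := by
  set r := Real.exp (-t) with hr
  have hr0 : 0 < r := Real.exp_pos _
  have hr1 : r < 1 := Real.exp_lt_one_iff.mpr (by linarith)
  have hnat : HasSum (fun n : ℕ => Real.exp (-(t * |((n:ℤ) : ℝ)|))) (1 - r)⁻¹ := by
    have := hasSum_geometric_of_lt_one hr0.le hr1
    convert this using 2 with n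
    rw [hr, ← Real.exp_nat_mul]
    congr 1
    push_cast
    rw [abs_of_nonneg (by positivity)]
    ring
  have hneg : HasSum (fun n : ℕ => Real.exp (-(t * |((-(n+1) : ℤ) : ℝ)|))) (r * (1 - r)⁻¹) := by
    have := (hasSum_geometric_of_lt_one hr0.le hr1).mul_left r
    convert this using 2 with n
    · rfl
    have : |((-(n+1) : ℤ) : ℝ)| = (n:ℝ) + 1 := by
      push_cast; rw [abs_neg, abs_of_nonneg (by positivity)]
    rw [this, hr, ← Real.exp_nat_mul, ← Real.exp_add]
    congr 1
    ring
  refine ⟨(1 - r)⁻¹ + r * (1 - r)⁻¹, HasSum.of_nat_of_neg_add_one hnat hneg, ?_⟩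
  have h1r : 0 < 1 - r := by linarith
  have hkey : r * (1 + t) ≤ 1 := by
    have := Real.add_one_le_exp t
    have het : 0 < Real.exp t := Real.exp_pos t
    have : r = (Real.exp t)⁻¹ := by rw [hr, Real.exp_neg]
    rw [this]
    rw [← div_eq_inv_mul, div_le_one het]
    linarith
  have heq : (1-r)⁻¹ + r * (1-r)⁻¹ = (1 + r)/(1-r) := by field_simp
  have h2t : 2 + 2/t = 2*(1+t)/t := by field_simp; ring
  rw [heq, h2t, div_le_div_iff₀ h1r ht]
  have hrt : r * t ≤ t := by nlinarith
  have h3 : r + r * t ≤ 1 := by nlinarith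
  nlinarith


open scoped ENNReal

lemma aux_tsum_pi_fin (g : ℤ → ℝ≥0∞) : ∀ N : ℕ,
    ∑' m : Fin N → ℤ, ∏ i, g (m i) = (∑' k : ℤ, g k) ^ N := by
  intro N
  induction N with
  | zero => rw [tsum_eq_single (fun _ => 0) (by intro b hb; exact absurd (funext fun i => i.elim0) hb)] <;> simp
  | succ N ih =>
    rw [← (Fin.consEquiv (fun _ : Fin (N+1) => ℤ)).tsum_eq]
    have h1 : ∀ p : ℤ × (Fin N → ℤ),
        ∏ i, g ((Fin.consEquiv (fun _ : Fin (N+1) => ℤ)) p i) = g p.1 * ∏ i, g (p.2 i) := by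
      intro p
      rw [Fin.prod_univ_succ]
      simp [Fin.consEquiv]
    calc ∑' p : ℤ × (Fin N → ℤ), ∏ i, g ((Fin.consEquiv (fun _ : Fin (N+1) => ℤ)) p i)
        = ∑' p : ℤ × (Fin N → ℤ), g p.1 * ∏ i, g (p.2 i) := tsum_congr h1
      _ = ∑' k : ℤ, ∑' m : Fin N → ℤ, g k * ∏ i, g (m i) :=
          ENNReal.tsum_prod (f := fun (k : ℤ) (m : Fin N → ℤ) => g k * ∏ i, g (m i))
      _ = ∑' k : ℤ, g k * ∑' m : Fin N → ℤ, ∏ i, g (m i) :=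
          tsum_congr (fun k => ENNReal.tsum_mul_left)
      _ = (∑' m : Fin N → ℤ, ∏ i, g (m i)) * ∑' k : ℤ, g k := by
          rw [ENNReal.tsum_mul_right]; ring
      _ = (∑' k : ℤ, g k) ^ (N + 1) := by rw [ih, pow_succ]

lemma aux_tsum_pi {ι : Type*} [Fintype ι] (g : ℤ → ℝ≥0∞) :
    ∑' m : ι → ℤ, ∏ i, g (m i) = (∑' k : ℤ, g k) ^ (Fintype.card ι) := by
  classical
  let e : ι ≃ Fin (Fintype.card ι) := Fintype.equivFin ι
  rw [← (Equiv.arrowCongr e.symm (Equiv.refl ℤ)).tsum_eq, ← aux_tsum_pi_fin g (Fintype.card ι)]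
  refine tsum_congr (fun m => ?_)
  have h : ∀ i : ι, (Equiv.arrowCongr e.symm (Equiv.refl ℤ)) m i = m (e i) := fun i => by
    simp [Equiv.arrowCongr]
  simp_rw [h]
  exact Equiv.prod_comp e (fun j => g (m j))


open Matrix

lemma aux_psd_diag_nonneg {n : ℕ} {T : Matrix (Fin n) (Fin n) ℝ} (hT : T.PosSemidef)
    (i : Fin n) : 0 ≤ T i i := by
  have h := hT.dotProduct_mulVec_nonneg (Pi.single i 1)
  simpa [dotProduct, mulVec, Pi.single_apply, Finset.sum_ite_eq, Finset.mul_sum] using h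

lemma aux_psd_entry_le_trace {n : ℕ} {T : Matrix (Fin n) (Fin n) ℝ} (hT : T.PosSemidef)
    (i j : Fin n) : |T i j| ≤ T.trace := by
  have hd := aux_psd_diag_nonneg hT
  have htr : ∀ k : Fin n, T k k ≤ T.trace := by
    intro k
    rw [Matrix.trace]
    exact Finset.single_le_sum (fun l _ => hd l) (Finset.mem_univ k)
  have htrace_nonneg : 0 ≤ T.trace := le_trans (hd i) (htr i)
  rcases eq_or_ne i j with rfl | hij
  · rw [abs_of_nonneg (hd i)]; exact htr i
  · have hsym : T j i = T i j := by
      have := hT.1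
      rw [Matrix.IsHermitian] at this
      conv_lhs => rw [← this]
      simp [Matrix.conjTranspose_apply]
    have hsum : T i i + T j j ≤ T.trace := by
      rw [Matrix.trace]
      have : T i i + T j j = ∑ k ∈ ({i, j} : Finset (Fin n)), T k k := by
        rw [Finset.sum_pair hij]
      rw [this]
      exact Finset.sum_le_sum_of_subset_of_nonneg (Finset.subset_univ _)
        (fun k _ _ => hd k)
    have key : ∀ ε : ℝ, ε = 1 ∨ ε = -1 →
        0 ≤ T i i + T j j + ε * (2 * T i j) := by
      intro ε hε
      have h := hT.dotProduct_mulVec_nonneg (Pi.single i 1 + Pi.single j ε)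
      have hε2 : ε * ε = 1 := by rcases hε with rfl | rfl <;> norm_num
      rw [star_trivial, Matrix.mulVec_add, add_dotProduct, Matrix.mulVec_single,
        Matrix.mulVec_single, single_dotProduct, single_dotProduct] at h
      simp only [Pi.add_apply, Pi.smul_apply, Matrix.col_apply, MulOpposite.smul_eq_mul_unop,
        MulOpposite.unop_op] at h
      rcases hε with rfl | rfl <;> [skip; skip] <;> nlinarith [h, hsym]
    have h1 := key 1 (Or.inl rfl)
    have h2 := key (-1) (Or.inr rfl)
    rw [abs_le]
    constructor <;> nlinarith

lemma aux_final (N : ℕ) {a r₀ : ℝ} (ha : 0 < a) (hr : 0 < r₀) :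
    ∃ C : ℝ, 0 < C ∧ ∀ δ : ℝ, 0 < δ →
      Real.exp (-(δ / 2 * r₀)) * (2 + 2 / (δ * a)) ^ N ≤ C / δ ^ (N + 1) := by
  refine ⟨(2/a)^N * (2^N * (a^N * (((N+1) : ℝ)/(r₀/2))^(N+1) + 1/(r₀/2))), by positivity,
    fun δ hδ => ?_⟩
  have ht : 0 < δ * a := by positivity
  have hE : Real.exp (-(δ / 2 * r₀)) = Real.exp (-(δ * (r₀/2))) := by ring_nf
  have h2 : 2 + 2 / (δ * a) = 2 * (δ * a + 1) / (δ * a) := by field_simp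
  rw [le_div_iff₀ (by positivity : (0:ℝ) < δ ^ (N+1)), hE, h2]
  have hEq : Real.exp (-(δ * (r₀/2))) * (2 * (δ * a + 1) / (δ * a)) ^ N * δ ^ (N + 1)
      = (2/a)^N * (Real.exp (-(δ * (r₀/2))) * (δ * a + 1) ^ N * δ) := by
    rw [div_pow, mul_pow, mul_pow, pow_succ, div_pow]
    field_simp
  rw [hEq]
  have hstep1 : (δ * a + 1) ^ N ≤ 2 ^ N * ((δ*a) ^ N + 1) := by
    have := aux_add_pow_le (by positivity : (0:ℝ) ≤ δ * a) zero_le_one N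
    simpa using this
  have hexp_pos : 0 < Real.exp (-(δ * (r₀/2))) := Real.exp_pos _
  have hb1 : Real.exp (-(δ * (r₀/2))) * ((δ*a) ^ N + 1) * δ
      ≤ a^N * (((N+1) : ℝ)/(r₀/2))^(N+1) + 1/(r₀/2) := by
    have hA : δ ^ (N+1) * Real.exp (-(δ * (r₀/2))) ≤ (((N+1) : ℝ)/(r₀/2))^(N+1) := by
      have := aux_pow_mul_exp_le (N+1) (by positivity : (0:ℝ) < r₀/2) hδ.le
      simpa using this
    have hBb : δ ^ 1 * Real.exp (-(δ * (r₀/2))) ≤ ((1:ℝ)/(r₀/2))^1 := by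
      have := aux_pow_mul_exp_le 1 (by positivity : (0:ℝ) < r₀/2) hδ.le
      simpa using this
    have hexpand : Real.exp (-(δ * (r₀/2))) * ((δ*a) ^ N + 1) * δ
        = a^N * (δ^(N+1) * Real.exp (-(δ * (r₀/2)))) + δ^1 * Real.exp (-(δ * (r₀/2))) := by
      rw [mul_pow, pow_succ, pow_one]
      ring
    rw [hexpand]
    have haN : (0:ℝ) ≤ a^N := by positivity
    have h1 := mul_le_mul_of_nonneg_left hA haN
    simp only [pow_one] at hBb ⊢
    nlinarith
  calc (2/a)^N * (Real.exp (-(δ * (r₀/2))) * (δ * a + 1) ^ N * δ)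
      ≤ (2/a)^N * (Real.exp (-(δ * (r₀/2))) * (2 ^ N * ((δ*a) ^ N + 1)) * δ) := by
        apply mul_le_mul_of_nonneg_left _ (by positivity)
        apply mul_le_mul_of_nonneg_right _ hδ.le
        exact mul_le_mul_of_nonneg_left hstep1 hexp_pos.le
    _ = (2/a)^N * (2^N * (Real.exp (-(δ * (r₀/2))) * ((δ*a) ^ N + 1) * δ)) := by ring
    _ ≤ (2/a)^N * (2^N * (a^N * (((N+1) : ℝ)/(r₀/2))^(N+1) + 1/(r₀/2))) := by
        apply mul_le_mul_of_nonneg_left _ (by positivity)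
        exact mul_le_mul_of_nonneg_left hb1 (by positivity)

attribute [local instance] Matrix.normedAddCommGroup Matrix.normedSpace

theorem stmt_3 (n : ℕ) (hn : 1 ≤ n) (L : Submodule ℤ (Matrix (Fin n) (Fin n) ℝ))
    [DiscreteTopology L] [@IsZLattice ℝ _ _ _ _ L ‹_›] :
    ∃ C : ℝ, 0 < C ∧ ∀ δ : ℝ, 0 < δ →
      Summable (fun T : {T : Matrix (Fin n) (Fin n) ℝ // T ∈ L ∧ T.PosDef} =>
        Real.exp (-δ * (T : Matrix (Fin n) (Fin n) ℝ).trace)) ∧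
      ∑' T : {T : Matrix (Fin n) (Fin n) ℝ // T ∈ L ∧ T.PosDef},
        Real.exp (-δ * (T : Matrix (Fin n) (Fin n) ℝ).trace) ≤ C / δ ^ (n ^ 2 + 1) := by
  classical
  set E := Matrix (Fin n) (Fin n) ℝ with hE
  letI : TopologicalSpace (Matrix (Fin n) (Fin n) ℝ) :=
    PseudoMetricSpace.toUniformSpace.toTopologicalSpace
  haveI : DiscreteTopology L := ‹_›
  have : Module.Finite ℤ L := ZLattice.module_finite ℝ L
  have : Module.Free ℤ L := ZLattice.module_free ℝ L
  set ι := Module.Free.ChooseBasisIndex ℤ L with hι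
  let b : Module.Basis ι ℤ L := Module.Free.chooseBasis ℤ L
  let bR : Module.Basis ι ℝ E := Module.Basis.ofZLatticeBasis ℝ L b
  set N := Fintype.card ι with hNdef
  have hN : N = n ^ 2 := by
    rw [hNdef, ← Module.finrank_eq_card_chooseBasisIndex, ZLattice.rank ℝ L,
      Module.finrank_matrix]
    simp [sq]
  have hNpos : 0 < N := by rw [hN]; positivity
  -- operator norm bound for coordinates
  let f : E →L[ℝ] (ι → ℝ) :=
    LinearMap.toContinuousLinearMap (bR.equivFun : E ≃ₗ[ℝ] (ι → ℝ)).toLinearMap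
  set K := ‖f‖ + 1 with hKdef
  have hK : 0 < K := by positivity
  have hcoord : ∀ (v : L) (i : ι), |((b.repr v i : ℤ) : ℝ)| ≤ K * ‖(v : E)‖ := by
    intro v i
    have h1 : bR.equivFun (v : E) i = ((b.repr v i : ℤ) : ℝ) := by
      rw [Module.Basis.equivFun_apply]
      exact Module.Basis.ofZLatticeBasis_repr_apply ℝ L b v i
    have h2 : ‖bR.equivFun (v : E) i‖ ≤ ‖f (v : E)‖ := norm_le_pi_norm _ i
    have h3 : ‖f (v : E)‖ ≤ ‖f‖ * ‖(v : E)‖ := f.le_opNorm _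
    have h4 : ‖f‖ * ‖(v : E)‖ ≤ K * ‖(v : E)‖ := by
      apply mul_le_mul_of_nonneg_right _ (norm_nonneg _)
      rw [hKdef]; linarith
    calc |((b.repr v i : ℤ) : ℝ)| = ‖bR.equivFun (v : E) i‖ := by
          rw [h1, Real.norm_eq_abs]
      _ ≤ K * ‖(v : E)‖ := le_trans h2 (le_trans h3 h4)
  -- minimal norm of nonzero lattice points
  obtain ⟨r, hr0, hrmin⟩ : ∃ r > 0, ∀ v : L, v ≠ 0 → r ≤ ‖(v : E)‖ := by
    have h0 : IsOpen ({0} : Set L) := isOpen_discrete _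
    rw [Metric.isOpen_iff] at h0
    obtain ⟨ε, hε, hball⟩ := h0 0 rfl
    refine ⟨ε, hε, fun v hv => ?_⟩
    by_contra hlt
    push_neg at hlt
    have hmem : v ∈ Metric.ball (0 : L) ε := by
      rw [Metric.mem_ball, Subtype.dist_eq, dist_eq_norm]
      simpa using hlt
    exact hv (hball hmem)
  -- basic facts about PosDef lattice points
  have hPD : ∀ T : {T : E // T ∈ L ∧ T.PosDef},
      r ≤ (T : E).trace ∧ ‖(T : E)‖ ≤ (T : E).trace := by
    rintro ⟨T, hTL, hTpd⟩
    have hpsd := hTpd.posSemidef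
    have htr_nonneg : 0 ≤ T.trace := by
      have := aux_psd_entry_le_trace hpsd ⟨0, hn⟩ ⟨0, hn⟩
      exact le_trans (abs_nonneg _) this
    have hnorm : ‖T‖ ≤ T.trace := by
      rw [Matrix.norm_le_iff htr_nonneg]
      intro i j
      rw [Real.norm_eq_abs]
      exact aux_psd_entry_le_trace hpsd i j
    have hT0 : (⟨T, hTL⟩ : L) ≠ 0 := by
      intro h
      have hTz : T = 0 := congrArg Subtype.val h
      have hx : (Pi.single (⟨0, hn⟩ : Fin n) 1 : Fin n → ℝ) ≠ 0 := by
        intro hc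
        have := congrFun hc ⟨0, hn⟩
        simp at this
      have h2 := hTpd.dotProduct_mulVec_pos hx
      rw [hTz] at h2
      simp only [Matrix.zero_mulVec, dotProduct_zero] at h2
      exact lt_irrefl 0 h2
    have hr_le : r ≤ ‖T‖ := hrmin ⟨T, hTL⟩ hT0
    exact ⟨le_trans hr_le hnorm, hnorm⟩
  -- coordinates map
  let φ : {T : E // T ∈ L ∧ T.PosDef} → (ι → ℤ) := fun T i => b.repr ⟨T.1, T.2.1⟩ i
  have hφinj : Function.Injective φ := by
    intro T T' h
    have h1 : b.repr ⟨T.1, T.2.1⟩ = b.repr ⟨T'.1, T'.2.1⟩ :=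
      Finsupp.ext (fun i => congrFun h i)
    have h2 : (⟨T.1, T.2.1⟩ : L) = ⟨T'.1, T'.2.1⟩ := b.repr.injective h1
    have h3 : (T : E) = (T' : E) := congrArg (Subtype.val : ↥L → E) h2
    exact Subtype.ext h3
  -- ℓ¹ bound on coordinates
  have hl1 : ∀ T : {T : E // T ∈ L ∧ T.PosDef},
      ∑ i, |((φ T i : ℤ) : ℝ)| ≤ N * K * (T : E).trace := by
    intro T
    have h1 : ∀ i : ι, |((φ T i : ℤ) : ℝ)| ≤ K * ‖(T : E)‖ := fun i => hcoord ⟨T.1, T.2.1⟩ i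
    calc ∑ i, |((φ T i : ℤ) : ℝ)| ≤ ∑ _i : ι, K * ‖(T : E)‖ :=
          Finset.sum_le_sum (fun i _ => h1 i)
      _ = N * (K * ‖(T : E)‖) := by rw [Finset.sum_const, Finset.card_univ, nsmul_eq_mul, hNdef]
      _ ≤ N * (K * (T : E).trace) := by
          apply mul_le_mul_of_nonneg_left _ (by positivity)
          exact mul_le_mul_of_nonneg_left (hPD T).2 hK.le
      _ = N * K * (T : E).trace := by ring
  -- the constant
  have haK : (0:ℝ) < (2 * N * K)⁻¹ := by positivity
  obtain ⟨C, hC, hCb⟩ := aux_final N haK hr0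
  refine ⟨C, hC, fun δ hδ => ?_⟩
  set t := δ / (2 * N * K) with htdef
  have ht : 0 < t := by rw [htdef]; positivity
  -- per-term bound
  have hterm : ∀ T : {T : E // T ∈ L ∧ T.PosDef},
      Real.exp (-δ * (T : E).trace) ≤
        Real.exp (-(δ / 2 * r)) * ∏ i, Real.exp (-(t * |((φ T i : ℤ) : ℝ)|)) := by
    intro T
    have h1 : r ≤ (T : E).trace := (hPD T).1
    have h2 : t * ∑ i, |((φ T i : ℤ) : ℝ)| ≤ δ / 2 * (T : E).trace := by
      have := mul_le_mul_of_nonneg_left (hl1 T) ht.le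
      calc t * ∑ i, |((φ T i : ℤ) : ℝ)| ≤ t * (N * K * (T : E).trace) := this
        _ = δ / 2 * (T : E).trace := by
            rw [htdef]
            field_simp
    rw [← Real.exp_sum]
    rw [← Real.exp_add]
    apply Real.exp_le_exp.mpr
    have hsum : ∑ i, -(t * |((φ T i : ℤ) : ℝ)|) = -(t * ∑ i, |((φ T i : ℤ) : ℝ)|) := by
      rw [Finset.mul_sum, Finset.sum_neg_distrib]
    rw [hsum]
    have hδ2 : δ / 2 * r ≤ δ / 2 * (T : E).trace :=
      mul_le_mul_of_nonneg_left h1 (by positivity)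
    nlinarith
  -- ENNReal computation
  set g : ℤ → ENNReal := fun k => ENNReal.ofReal (Real.exp (-(t * |(k : ℝ)|))) with hg
  obtain ⟨S, hS, hSle⟩ := aux_hasSum_int_exp ht
  have hSnonneg : 0 ≤ S := hS.nonneg (fun k => Real.exp_nonneg _)
  have hgsum : ∑' k : ℤ, g k = ENNReal.ofReal S := by
    rw [hg, ← ENNReal.ofReal_tsum_of_nonneg (fun k => Real.exp_nonneg _) hS.summable,
      hS.tsum_eq]
  have hbound : ∑' T : {T : E // T ∈ L ∧ T.PosDef},
      ENNReal.ofReal (Real.exp (-δ * (T : E).trace)) ≤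
      ENNReal.ofReal (Real.exp (-(δ / 2 * r)) * (2 + 2 / t) ^ N) := by
    calc ∑' T : {T : E // T ∈ L ∧ T.PosDef}, ENNReal.ofReal (Real.exp (-δ * (T : E).trace))
        ≤ ∑' T : {T : E // T ∈ L ∧ T.PosDef},
            ENNReal.ofReal (Real.exp (-(δ / 2 * r))) * ∏ i, g (φ T i) := by
          apply ENNReal.tsum_le_tsum
          intro T
          have := hterm T
          calc ENNReal.ofReal (Real.exp (-δ * (T : E).trace))
              ≤ ENNReal.ofReal (Real.exp (-(δ / 2 * r)) *
                  ∏ i, Real.exp (-(t * |((φ T i : ℤ) : ℝ)|))) := ENNReal.ofReal_le_ofReal this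
            _ = ENNReal.ofReal (Real.exp (-(δ / 2 * r))) * ∏ i, g (φ T i) := by
                rw [ENNReal.ofReal_mul (Real.exp_nonneg _)]
                congr 1
                rw [hg, ENNReal.ofReal_prod_of_nonneg (fun i _ => Real.exp_nonneg _)]
      _ = ENNReal.ofReal (Real.exp (-(δ / 2 * r))) *
            ∑' T : {T : E // T ∈ L ∧ T.PosDef}, ∏ i, g (φ T i) := ENNReal.tsum_mul_left
      _ ≤ ENNReal.ofReal (Real.exp (-(δ / 2 * r))) * ∑' m : ι → ℤ, ∏ i, g (m i) := by
          apply mul_le_mul_right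
          exact ENNReal.tsum_comp_le_tsum_of_injective hφinj (fun m => ∏ i, g (m i))
      _ = ENNReal.ofReal (Real.exp (-(δ / 2 * r))) * (∑' k : ℤ, g k) ^ N := by
          rw [aux_tsum_pi g, hNdef]
      _ ≤ ENNReal.ofReal (Real.exp (-(δ / 2 * r))) * (ENNReal.ofReal (2 + 2 / t)) ^ N := by
          apply mul_le_mul_right
          apply pow_le_pow_left' _ N
          rw [hgsum]
          exact ENNReal.ofReal_le_ofReal hSle
      _ = ENNReal.ofReal (Real.exp (-(δ / 2 * r)) * (2 + 2 / t) ^ N) := by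
          rw [ENNReal.ofReal_mul (Real.exp_nonneg _), ENNReal.ofReal_pow (by positivity)]
  -- convert back to ℝ
  have hfinal : Real.exp (-(δ / 2 * r)) * (2 + 2 / t) ^ N ≤ C / δ ^ (N + 1) := by
    have := hCb δ hδ
    have htt : t = δ * (2 * N * K)⁻¹ := by rw [htdef]; field_simp
    rw [htt]
    exact this
  have hne : ∑' T : {T : E // T ∈ L ∧ T.PosDef},
      ENNReal.ofReal (Real.exp (-δ * (T : E).trace)) ≠ ⊤ :=
    ne_top_of_le_ne_top ENNReal.ofReal_ne_top hbound
  have hsummable : Summable (fun T : {T : E // T ∈ L ∧ T.PosDef} =>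
      Real.exp (-δ * (T : E).trace)) := by
    have := ENNReal.summable_toReal hne
    convert this using 2 with T
    rw [ENNReal.toReal_ofReal (Real.exp_nonneg _)]
  refine ⟨hsummable, ?_⟩
  have htsum_eq : ∑' T : {T : E // T ∈ L ∧ T.PosDef}, Real.exp (-δ * (T : E).trace)
      = (∑' T : {T : E // T ∈ L ∧ T.PosDef},
          ENNReal.ofReal (Real.exp (-δ * (T : E).trace))).toReal := by
    rw [ENNReal.tsum_toReal_eq (fun T => ENNReal.ofReal_ne_top)]
    congr 1
    funext T
    rw [ENNReal.toReal_ofReal (Real.exp_nonneg _)]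
  rw [htsum_eq, ← hN]
  calc (∑' T : {T : E // T ∈ L ∧ T.PosDef},
        ENNReal.ofReal (Real.exp (-δ * (T : E).trace))).toReal
      ≤ (ENNReal.ofReal (Real.exp (-(δ / 2 * r)) * (2 + 2 / t) ^ N)).toReal :=
        ENNReal.toReal_mono ENNReal.ofReal_ne_top hbound
    _ = Real.exp (-(δ / 2 * r)) * (2 + 2 / t) ^ N := by
        rw [ENNReal.toReal_ofReal (by positivity)]
    _ ≤ C / δ ^ (N + 1) := hfinal
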